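/- Let X be a finite set with a distinguished element x₀, Y a finite set, and W a channel assigning to each x ∈ X a pmf W(·|x) on Y with W(y|x₀) > 0 for all y. Let A and B be disjoint nonempty finite sets with U = A ∪ B, P_U^A a pmf on A, P_U^B a pmf on B; for each u ∈ A let P̃_{X|U}(·|u) be a pmf on X with P̃_{X|U}(x₀|u) = 0, and for each u ∈ B let P_{X|U}(·|u) be a pmf on X. For (μ₁,μ₂) ∈ ℝ² define Q^{μ₁,μ₂} : U × X → ℝ by Q^{μ₁,μ₂}(u,x) = (1−μ₁)·P_U^A(u)·((1−μ₂)·1{x=x₀} + μ₂·P̃_{X|U}(x|u)) for u ∈ A and Q^{μ₁,μ₂}(u,x) = μ₁·P_U^B(u)·P_{X|U}(x|u) for u ∈ B, with U-marginal Q_U(u) = ∑_x Q^{μ₁,μ₂}(u,x). Define the conditional mutual information J(μ₁,μ₂) = ∑_{u,x,y} Q^{μ₁,μ₂}(u,x)·W(y|x)·(Real.log(W(y|x)) + Real.log(Q_U(u)) − Real.log(∑_{x'} Q^{μ₁,μ₂}(u,x')·W(y|x'))). Set P̃ᴬ_X(x) = ∑_{u∈A} P_U^A(u)·P̃_{X|U}(x|u).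 Then the map μ₂ ↦ J(0, μ₂) has a derivative at μ₂ = 0, equal to ∑_{x∈X} P̃ᴬ_X(x)·D(W(·|x) ‖ W(·|x₀)). -/

import Mathlib

open Real

/-- Kullback–Leibler divergence of finite-alphabet "distributions" `p`, `q`. -/
noncomputable def klDiv {Z : Type*} [Fintype Z] (p q : Z → ℝ) : ℝ :=
  ∑ z, p z * (Real.log (p z) - Real.log (q z))

theorem stmt_7 {U X Y : Type*} [Fintype U] [Fintype X] [Fintype Y]
    [DecidableEq U] [DecidableEq X]
    (x₀ : X) (W : X → Y → ℝ)
    (hW0 : ∀ x y, 0 ≤ W x y) (hW1 : ∀ x, ∑ y, W x y = 1) (hWpos : ∀ y, 0 < W x₀ y)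
    (A B : Finset U) (hdisj : Disjoint A B) (hAne : A.Nonempty) (hBne : B.Nonempty)
    (hcover : A ∪ B = Finset.univ)
    (PUA PUB : U → ℝ)
    (hPUA0 : ∀ u ∈ A, 0 ≤ PUA u) (hPUA1 : ∑ u ∈ A, PUA u = 1)
    (hPUB0 : ∀ u ∈ B, 0 ≤ PUB u) (hPUB1 : ∑ u ∈ B, PUB u = 1)
    (PtXU PXU : U → X → ℝ)
    (hPt0 : ∀ u ∈ A, ∀ x, 0 ≤ PtXU u x) (hPt1 : ∀ u ∈ A, ∑ x, PtXU u x = 1)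
    (hPtx0 : ∀ u ∈ A, PtXU u x₀ = 0)
    (hP0 : ∀ u ∈ B, ∀ x, 0 ≤ PXU u x) (hP1 : ∀ u ∈ B, ∑ x, PXU u x = 1)
    (Q : ℝ → ℝ → U → X → ℝ)
    (hQ : ∀ μ₁ μ₂ u x, Q μ₁ μ₂ u x =
      if u ∈ A then
        (1 - μ₁) * PUA u * ((1 - μ₂) * (if x = x₀ then 1 else 0) + μ₂ * PtXU u x)
      else μ₁ * PUB u * PXU u x)
    (J : ℝ → ℝ → ℝ)
    (hJ : ∀ μ₁ μ₂, J μ₁ μ₂ = ∑ u, ∑ x, ∑ y, Q μ₁ μ₂ u x * W x y *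
      (Real.log (W x y) + Real.log (∑ x', Q μ₁ μ₂ u x')
        - Real.log (∑ x', Q μ₁ μ₂ u x' * W x' y))) :
    HasDerivAt (fun μ₂ => J 0 μ₂)
      (∑ x, (∑ u ∈ A, PUA u * PtXU u x) * klDiv (W x) (W x₀)) 0 := by

  classical
  -- abbreviations
  set T : U → Y → ℝ := fun u y => ∑ x, PtXU u x * W x y with hTdef
  set g : ℝ → U → Y → ℝ := fun μ u y => (1 - μ) * W x₀ y + μ * T u y with hgdef
  have hg0 : ∀ u y, g 0 u y = W x₀ y := by intro u y; simp [hgdef]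
  have hTsum : ∀ u ∈ A, ∑ y, T u y = 1 := by
    intro u hu
    rw [Finset.sum_comm]
    calc ∑ x, ∑ y, PtXU u x * W x y = ∑ x, PtXU u x * ∑ y, W x y := by
          simp [Finset.mul_sum]
      _ = 1 := by simp [hW1, hPt1 u hu]
  have hdelta : ∀ (f : X → ℝ), ∑ x', (if x' = x₀ then (1:ℝ) else 0) * f x' = f x₀ := by
    intro f; simp
  set F : ℝ → ℝ := fun μ => ∑ u ∈ A, ∑ x, ∑ y,
      (PUA u * (((1 - μ) * (if x = x₀ then (1:ℝ) else 0) + μ * PtXU u x) * W x y)) *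
        (Real.log (W x y) - Real.log (g μ u y)) with hFdef
  set d : U → X → Y → ℝ := fun u x y =>
      (PUA u * ((PtXU u x - (if x = x₀ then (1:ℝ) else 0)) * W x y)) *
        (Real.log (W x y) - Real.log (W x₀ y))
      + (PUA u * ((if x = x₀ then (1:ℝ) else 0) * W x y)) *
        (-((T u y - W x₀ y) / W x₀ y)) with hddef
  -- Step A : derivative of F
  have hF : HasDerivAt F (∑ u ∈ A, ∑ x, ∑ y, d u x y) 0 := by
    apply HasDerivAt.fun_sum; intro u hu
    apply HasDerivAt.fun_sum; intro x _
    apply HasDerivAt.fun_sum; intro y _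
    have h1 : HasDerivAt
        (fun μ => PUA u * (((1 - μ) * (if x = x₀ then (1:ℝ) else 0) + μ * PtXU u x) * W x y))
        (PUA u * ((PtXU u x - (if x = x₀ then (1:ℝ) else 0)) * W x y)) 0 := by
      have := ((((hasDerivAt_id (0:ℝ)).const_sub 1).mul_const
            (if x = x₀ then (1:ℝ) else 0)).add
          ((hasDerivAt_id (0:ℝ)).mul_const (PtXU u x))).mul_const (W x y)
      have := this.const_mul (PUA u)
      refine this.congr_deriv ?_
      ring
    have hgd : HasDerivAt (fun μ => g μ u y) (T u y - W x₀ y) 0 := by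
      have := (((hasDerivAt_id (0:ℝ)).const_sub 1).mul_const (W x₀ y)).add
          ((hasDerivAt_id (0:ℝ)).mul_const (T u y))
      refine this.congr_deriv ?_
      ring
    have h2 : HasDerivAt (fun μ => Real.log (W x y) - Real.log (g μ u y))
        (-((T u y - W x₀ y) / W x₀ y)) 0 := by
      have hlog := hgd.log (by rw [hg0]; exact (hWpos y).ne')
      have := hlog.const_sub (Real.log (W x y))
      rw [hg0] at this
      exact this
    have := h1.mul h2
    refine this.congr_deriv ?_
    simp only [hddef, hg0]
    ring
  -- Step B : J 0 = F near 0
  have hgpos : ∀ᶠ μ in nhds (0:ℝ), ∀ u, ∀ y, 0 < g μ u y := by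
    rw [Filter.eventually_all]
    intro u
    rw [Filter.eventually_all]
    intro y
    have hcont : ContinuousAt (fun μ => g μ u y) 0 := by
      simp only [hgdef]; fun_prop
    have h0 : (0:ℝ) < g 0 u y := by rw [hg0]; exact hWpos y
    exact hcont.eventually (eventually_gt_nhds h0)
  have heq : (fun μ₂ => J 0 μ₂) =ᶠ[nhds (0:ℝ)] F := by
    filter_upwards [hgpos] with μ hg
    rw [hJ, hFdef]
    rw [← hcover, Finset.sum_union hdisj]
    have hB0 : ∑ u ∈ B, ∑ x, ∑ y, Q 0 μ u x * W x y *
        (Real.log (W x y) + Real.log (∑ x', Q 0 μ u x')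
          - Real.log (∑ x', Q 0 μ u x' * W x' y)) = 0 := by
      apply Finset.sum_eq_zero; intro u hu
      have huA : u ∉ A := Finset.disjoint_left.mp hdisj.symm hu
      apply Finset.sum_eq_zero; intro x _
      apply Finset.sum_eq_zero; intro y _
      rw [hQ]; simp [huA]
    rw [hB0, add_zero]
    apply Finset.sum_congr rfl; intro u hu
    have hQu : ∀ x, Q 0 μ u x =
        PUA u * ((1 - μ) * (if x = x₀ then (1:ℝ) else 0) + μ * PtXU u x) := by
      intro x; rw [hQ]; simp [hu]
    have hsum1 : ∑ x', Q 0 μ u x' = PUA u := by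
      simp only [hQu]
      rw [show ∀ (h : X → ℝ), (∑ x', PUA u * h x') = PUA u * ∑ x', h x' from
        fun h => (Finset.mul_sum _ _ _).symm]
      rw [Finset.sum_add_distrib]
      rw [show (∑ x', (1 - μ) * (if x' = x₀ then (1:ℝ) else 0)) =
          (1 - μ) * ∑ x', ((if x' = x₀ then (1:ℝ) else 0) * 1) from by
        rw [Finset.mul_sum]; apply Finset.sum_congr rfl; intros; ring]
      rw [hdelta (fun _ => (1:ℝ)), ← Finset.mul_sum, hPt1 u hu]
      ring
    have hsum2 : ∀ y, ∑ x', Q 0 μ u x' * W x' y = PUA u * g μ u y := by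
      intro y
      simp only [hQu, hgdef, hTdef]
      calc ∑ x', PUA u * ((1 - μ) * (if x' = x₀ then (1:ℝ) else 0) + μ * PtXU u x') * W x' y
          = ∑ x', ((PUA u * (1 - μ)) * ((if x' = x₀ then (1:ℝ) else 0) * W x' y)
              + (PUA u * μ) * (PtXU u x' * W x' y)) := by
            apply Finset.sum_congr rfl; intros; ring
        _ = (PUA u * (1 - μ)) * (∑ x', (if x' = x₀ then (1:ℝ) else 0) * W x' y)
              + (PUA u * μ) * ∑ x', PtXU u x' * W x' y := by
            rw [Finset.sum_add_distrib, Finset.mul_sum, Finset.mul_sum]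
        _ = PUA u * ((1 - μ) * W x₀ y + μ * ∑ x', PtXU u x' * W x' y) := by
            rw [hdelta (fun x' => W x' y)]; ring
    apply Finset.sum_congr rfl; intro x _
    apply Finset.sum_congr rfl; intro y _
    rw [hQu, hsum1, hsum2]
    rcases eq_or_ne (PUA u) 0 with h | h
    · simp [h]
    · rw [Real.log_mul h (hg u y).ne']
      ring
  -- Step C : the sum of derivatives equals the target
  have key : ∀ u ∈ A, ∀ x, ∑ y, d u x y = PtXU u x * (PUA u * klDiv (W x) (W x₀)) := by
    intro u hu x
    by_cases hx : x = x₀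
    · rw [hx]
      have hterm : ∀ y, d u x₀ y = PUA u * (W x₀ y - T u y) := by
        intro y
        simp only [hddef, if_pos rfl, hPtx0 u hu, sub_self, mul_zero, zero_mul, zero_add]
        simp only [if_true, one_mul]
        have hne := (hWpos y).ne'
        field_simp
        ring
      rw [Finset.sum_congr rfl (fun y _ => hterm y), ← Finset.mul_sum,
        Finset.sum_sub_distrib, hW1, hTsum u hu, hPtx0 u hu]
      simp
    · have hterm : ∀ y, d u x y =
          PtXU u x * (PUA u * (W x y * (Real.log (W x y) - Real.log (W x₀ y)))) := by
        intro y
        simp only [hddef, if_neg hx]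
        ring
      rw [Finset.sum_congr rfl (fun y _ => hterm y), ← Finset.mul_sum, ← Finset.mul_sum]
      rfl
  have hsumd : ∑ u ∈ A, ∑ x, ∑ y, d u x y
      = ∑ x, (∑ u ∈ A, PUA u * PtXU u x) * klDiv (W x) (W x₀) := by
    rw [Finset.sum_congr rfl (fun u hu => Finset.sum_congr rfl (fun x _ => key u hu x))]
    rw [Finset.sum_comm]
    apply Finset.sum_congr rfl; intro x _
    rw [Finset.sum_mul]
    apply Finset.sum_congr rfl; intros; ring
  rw [← hsumd]
  exact hF.congr_of_eventuallyEq heq
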